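/- arXiv:2510.21506 — 2 statements merged into one kernel-verified Lean document; each statement's English description precedes it below -/
import Mathlib

section
/- Let V be the vertex set of the infinite rooted binary tree (finite binary strings), let q ∈ [0,1]^V, and let X^(1),…,X^(n) be n i.i.d. samples from the product measure Prod(q) on {0,1}^V. Then with probability 1 there exists d_0 ∈ ℕ such that for all d > d_0, sup over branches b ∈ {0,1}^d of |(1/d) Σ_{j=1}^d (1/n) Σ_{i=1}^n (X^(i)_{(b_1,…,b_j)} − q_{(b_1,…,b_j)})| < 1/√n, where (b_1,…,b_j) denotes the length-j prefix of b. -/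
open MeasureTheory Filter
open scoped ENNReal Topology

/-- `μ = Prod q`: the product probability measure on `{0,1}^ι` with independent
coordinates, the `v`-th coordinate having mean `q v`. -/
def IsBernoulliProduct {ι : Type*} (q : ι → ℝ) (μ : Measure (ι → Bool)) : Prop :=
  IsProbabilityMeasure μ ∧
  ∀ (F : Finset ι) (f : ι → Bool),
    μ {x | ∀ j ∈ F, x j = f j} = ∏ j ∈ F, ENNReal.ofReal (if f j then q j else 1 - q j)

/-- The length-`j` prefix `(b_1, …, b_j)` of an infinite branch `b ∈ {0,1}^ℕ`, as a
vertex of the infinite binary tree (a finite binary string). -/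
def pref (b : ℕ → Bool) (j : ℕ) : List Bool := List.ofFn fun k : Fin j => b k.1

section Aux
open Real Finset

def bval (b : Bool) : ℝ := if b then 1 else 0

def wgt (p : ℝ) (b : Bool) : ℝ := if b then p else 1 - p

lemma wgt_nonneg {p : ℝ} (hp : p ∈ Set.Icc (0:ℝ) 1) (b : Bool) : 0 ≤ wgt p b := by
  cases b <;> simp [wgt] <;> linarith [hp.1, hp.2]

lemma myExpQuad {x : ℝ} (hx : |x| ≤ 1) : Real.exp x ≤ 1 + x + (3/4) * x^2 := by
  have h := Real.exp_bound hx (by norm_num : 0 < 2)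
  have hs : ∑ i ∈ Finset.range 2, x ^ i / (Nat.factorial i) = 1 + x := by
    simp [Finset.sum_range_succ, Nat.factorial]
  rw [hs] at h
  have h2 : |x| ^ 2 = x ^ 2 := sq_abs x
  have := abs_le.mp h
  have hb : ((2+1 : ℕ) : ℝ) / ((Nat.factorial 2 : ℕ) * 2) = 3/4 := by
    norm_num [Nat.factorial]
  nlinarith [this.2, sq_abs x]

lemma myFactor {p lam : ℝ} (hp : p ∈ Set.Icc (0:ℝ) 1) (h0 : 0 ≤ lam) (h1 : lam ≤ 1) :
    (1 - p) * Real.exp (lam * (0 - p)) + p * Real.exp (lam * (1 - p))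
      ≤ Real.exp (3/16 * lam^2) := by
  obtain ⟨hp0, hp1⟩ := hp
  have e1 : Real.exp (lam * (0 - p)) ≤ 1 + lam * (0 - p) + 3/4 * (lam * (0 - p))^2 := by
    apply myExpQuad
    rw [abs_mul]
    calc |lam| * |0 - p| ≤ 1 * 1 := by
          apply mul_le_mul <;> simp [abs_le] <;> constructor <;> linarith
      _ = 1 := by ring
  have e2 : Real.exp (lam * (1 - p)) ≤ 1 + lam * (1 - p) + 3/4 * (lam * (1 - p))^2 := by
    apply myExpQuad
    rw [abs_mul]
    calc |lam| * |1 - p| ≤ 1 * 1 := by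
          apply mul_le_mul <;> simp [abs_le] <;> constructor <;> linarith
      _ = 1 := by ring
  have e3 : 1 + 3/16 * lam^2 ≤ Real.exp (3/16 * lam^2) := by
    have := Real.add_one_le_exp (3/16 * lam^2); linarith
  nlinarith [mul_le_mul_of_nonneg_left e1 (by linarith : (0:ℝ) ≤ 1 - p),
    mul_le_mul_of_nonneg_left e2 hp0, sq_nonneg (lam * (1 - 2*p)), sq_nonneg lam,
    mul_nonneg hp0 (by linarith : (0:ℝ) ≤ 1 - p), sq_nonneg (lam*(1-2*p)*lam)]

lemma hoeff {K : Type*} [Fintype K] [DecidableEq K] (p : K → ℝ) (hp : ∀ k, p k ∈ Set.Icc (0:ℝ) 1)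
    (lam t : ℝ) (h0 : 0 ≤ lam) (h1 : lam ≤ 1) :
    ∑ g : K → Bool, (if t ≤ ∑ k, (bval (g k) - p k) then ∏ k, wgt (p k) (g k) else 0)
      ≤ Real.exp (-(lam * t) + 3/16 * lam^2 * Fintype.card K) := by
  classical
  have step1 : ∑ g : K → Bool, (if t ≤ ∑ k, (bval (g k) - p k) then ∏ k, wgt (p k) (g k) else 0)
      ≤ ∑ g : K → Bool, Real.exp (-(lam * t)) *
          ∏ k, (wgt (p k) (g k) * Real.exp (lam * (bval (g k) - p k))) := by
    apply Finset.sum_le_sum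
    intro g _
    have hprod : (0:ℝ) ≤ ∏ k, wgt (p k) (g k) := Finset.prod_nonneg fun k _ => wgt_nonneg (hp k) _
    have hexps : ∏ k, (wgt (p k) (g k) * Real.exp (lam * (bval (g k) - p k)))
        = (∏ k, wgt (p k) (g k)) * Real.exp (lam * ∑ k, (bval (g k) - p k)) := by
      rw [Finset.prod_mul_distrib, ← Real.exp_sum, Finset.mul_sum]
    rw [hexps]
    split_ifs with h
    · rw [← mul_assoc, mul_comm (Real.exp _), mul_assoc, ← Real.exp_add]
      apply le_mul_of_one_le_right hprod
      rw [← Real.exp_zero]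
      apply Real.exp_le_exp.mpr
      nlinarith
    · positivity
  refine step1.trans ?_
  rw [← Finset.mul_sum]
  have step2 : ∑ g : K → Bool, ∏ k, (wgt (p k) (g k) * Real.exp (lam * (bval (g k) - p k)))
      = ∏ k, ∑ b : Bool, (wgt (p k) b * Real.exp (lam * (bval b - p k))) := by
    rw [Finset.prod_univ_sum]
    rw [← Fintype.piFinset_univ]
  rw [step2]
  have step3 : ∏ k : K, ∑ b : Bool, (wgt (p k) b * Real.exp (lam * (bval b - p k)))
      ≤ ∏ k : K, Real.exp (3/16 * lam^2) := by
    apply Finset.prod_le_prod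
    · intro k _
      apply Finset.sum_nonneg
      intro b _
      exact mul_nonneg (wgt_nonneg (hp k) b) (Real.exp_pos _).le
    · intro k _
      have : ∑ b : Bool, (wgt (p k) b * Real.exp (lam * (bval b - p k)))
          = (1 - p k) * Real.exp (lam * (0 - p k)) + p k * Real.exp (lam * (1 - p k)) := by
        simp [Fintype.sum_bool, wgt, bval]; ring
      rw [this]
      exact myFactor (hp k) h0 h1
  refine le_trans (mul_le_mul_of_nonneg_left step3 (Real.exp_pos _).le) ?_
  rw [Finset.prod_const, ← Real.exp_nat_mul, ← Real.exp_add]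
  apply Real.exp_le_exp.mpr
  rw [Finset.card_univ]
  ring_nf
  exact le_refl _

lemma hoeff_neg {K : Type*} [Fintype K] [DecidableEq K] (p : K → ℝ)
    (hp : ∀ k, p k ∈ Set.Icc (0:ℝ) 1)
    (lam t : ℝ) (h0 : 0 ≤ lam) (h1 : lam ≤ 1) :
    ∑ g : K → Bool, (if t ≤ ∑ k, (p k - bval (g k)) then ∏ k, wgt (p k) (g k) else 0)
      ≤ Real.exp (-(lam * t) + 3/16 * lam^2 * Fintype.card K) := by
  classical
  have hp' : ∀ k, (1 - p k) ∈ Set.Icc (0:ℝ) 1 := fun k => ⟨by linarith [(hp k).2], by linarith [(hp k).1]⟩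
  have key := hoeff (fun k => 1 - p k) hp' lam t h0 h1
  refine le_trans (le_of_eq ?_) key
  apply Fintype.sum_bijective (fun g : K → Bool => fun k => !(g k))
  · constructor
    · intro a b hab
      funext k
      have := congrFun hab k
      simpa using this
    · intro g
      exact ⟨fun k => !(g k), by funext k; simp⟩
  · intro g
    have hcond : (∑ k, (p k - bval (g k))) = ∑ k, (bval (!(g k)) - (1 - p k)) := by
      apply Finset.sum_congr rfl
      intro k _
      cases g k <;> simp [bval] <;> ring
    have hw : ∀ k, wgt (p k) (g k) = wgt (1 - p k) (!(g k)) := by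
      intro k; cases g k <;> simp [wgt]
    rw [hcond]
    congr 1
    exact Finset.prod_congr rfl fun k _ => hw k

lemma hoeff_abs {K : Type*} [Fintype K] [DecidableEq K] (p : K → ℝ)
    (hp : ∀ k, p k ∈ Set.Icc (0:ℝ) 1)
    (lam t : ℝ) (h0 : 0 ≤ lam) (h1 : lam ≤ 1) :
    ∑ g : K → Bool, (if t ≤ |∑ k, (bval (g k) - p k)| then ∏ k, wgt (p k) (g k) else 0)
      ≤ 2 * Real.exp (-(lam * t) + 3/16 * lam^2 * Fintype.card K) := by
  classical
  have step : ∑ g : K → Bool, (if t ≤ |∑ k, (bval (g k) - p k)| then ∏ k, wgt (p k) (g k) else 0)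
      ≤ (∑ g : K → Bool, (if t ≤ ∑ k, (bval (g k) - p k) then ∏ k, wgt (p k) (g k) else 0))
        + ∑ g : K → Bool, (if t ≤ ∑ k, (p k - bval (g k)) then ∏ k, wgt (p k) (g k) else 0) := by
    rw [← Finset.sum_add_distrib]
    apply Finset.sum_le_sum
    intro g _
    have hprod : (0:ℝ) ≤ ∏ k, wgt (p k) (g k) := Finset.prod_nonneg fun k _ => wgt_nonneg (hp k) _
    have hneg : ∑ k, (p k - bval (g k)) = -∑ k, (bval (g k) - p k) := by
      rw [← Finset.sum_neg_distrib]; simp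
    have i1 : (0:ℝ) ≤ (if t ≤ ∑ k, (bval (g k) - p k) then ∏ k, wgt (p k) (g k) else 0) := by
      split_ifs; exacts [hprod, le_refl 0]
    have i2 : (0:ℝ) ≤ (if t ≤ ∑ k, (p k - bval (g k)) then ∏ k, wgt (p k) (g k) else 0) := by
      split_ifs; exacts [hprod, le_refl 0]
    by_cases h : t ≤ |∑ k, (bval (g k) - p k)|
    · rw [if_pos h]
      rcases le_abs.mp h with hc | hc
      · rw [if_pos hc]; linarith
      · rw [if_pos (by rw [hneg]; linarith : t ≤ ∑ k, (p k - bval (g k)))]; linarith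
    · rw [if_neg h]; linarith
  refine step.trans ?_
  have b1 := hoeff p hp lam t h0 h1
  have b2 := hoeff_neg p hp lam t h0 h1
  linarith

lemma cyl_measure {ι : Type*} [DecidableEq ι] (q : ι → ℝ) (hq : ∀ v, q v ∈ Set.Icc (0:ℝ) 1)
    (μ : Measure (ι → Bool)) (hμ : IsBernoulliProduct q μ)
    {m : ℕ} (v : Fin m → ι) (hv : Function.Injective v) (a : Fin m → Bool) :
    μ {x | ∀ j, x (v j) = a j} = ENNReal.ofReal (∏ j, wgt (q (v j)) (a j)) := by
  classical
  set F : Finset ι := Finset.image v Finset.univ with hF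
  set f : ι → Bool := fun u => if h : ∃ j, v j = u then a h.choose else false with hf
  have hfv : ∀ j, f (v j) = a j := by
    intro j
    have hex : ∃ j', v j' = v j := ⟨j, rfl⟩
    rw [hf]
    simp only [dif_pos hex]
    congr 1
    exact hv hex.choose_spec
  have hset : {x : ι → Bool | ∀ j, x (v j) = a j} = {x | ∀ u ∈ F, x u = f u} := by
    ext x
    simp only [Set.mem_setOf_eq, hF, Finset.mem_image, Finset.mem_univ, true_and]
    constructor
    · rintro h u ⟨j, rfl⟩
      rw [hfv j]; exact h j
    · intro h j
      rw [← hfv j]; exact h (v j) ⟨j, rfl⟩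
  rw [hset, hμ.2 F f, hF, Finset.prod_image (fun x _ y _ h => hv h)]
  rw [ENNReal.ofReal_prod_of_nonneg]
  · apply Finset.prod_congr rfl
    intro j _
    rw [hfv j]
    cases a j <;> simp [wgt]
  · intro j _
    cases a j <;> simp [wgt] <;> linarith [(hq (v j)).1, (hq (v j)).2]

/-- Per-branch, per-depth bound. -/
lemma branch_bound (q : List Bool → ℝ)
    (hq : ∀ v, q v ∈ Set.Icc (0 : ℝ) 1)
    (μ : Measure (List Bool → Bool)) (hμ : IsBernoulliProduct q μ)
    (n : ℕ) (hn : 1 ≤ n) (d : ℕ) (hd : 1 ≤ d) (b : ℕ → Bool) :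
    (Measure.pi fun _ : Fin n => μ) {S | ¬ (|(1 / (d : ℝ)) * ∑ j ∈ Finset.range d,
            (1 / (n : ℝ)) * ∑ i : Fin n,
              ((if S i (pref b (j + 1)) then (1 : ℝ) else 0) - q (pref b (j + 1)))|
          < 1 / Real.sqrt n)}
      ≤ ENNReal.ofReal (2 * Real.exp (-(13/16) * d)) := by
  classical
  haveI : IsProbabilityMeasure μ := hμ.1
  set M := (Measure.pi fun _ : Fin n => μ) with hM
  have hn0 : (0:ℝ) < n := by exact_mod_cast Nat.lt_of_lt_of_le Nat.zero_lt_one hn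
  have hd0 : (0:ℝ) < d := by exact_mod_cast Nat.lt_of_lt_of_le Nat.zero_lt_one hd
  have hsn1 : 1 ≤ Real.sqrt n := by
    rw [show (1:ℝ) = Real.sqrt 1 by simp]
    exact Real.sqrt_le_sqrt (by exact_mod_cast hn)
  have hsn0 : 0 < Real.sqrt n := lt_of_lt_of_le one_pos hsn1
  set vtx : Fin d → List Bool := fun j => pref b ((j : ℕ) + 1) with hvtx
  have hvlen : ∀ j : Fin d, (vtx j).length = (j : ℕ) + 1 := by
    intro j; simp [hvtx, pref, List.length_ofFn]
  have hvinj : Function.Injective vtx := by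
    intro j j' h
    have := congrArg List.length h
    rw [hvlen, hvlen] at this
    exact Fin.ext (by omega)
  set K := Fin n × Fin d
  set p : K → ℝ := fun k => q (vtx k.2) with hp
  set cond : (K → Bool) → Prop := fun h =>
    (d : ℝ) * Real.sqrt n ≤ |∑ k : K, (bval (h k) - p k)| with hcond
  set C : (K → Bool) → Set (Fin n → List Bool → Bool) := fun h =>
    Set.pi Set.univ (fun i : Fin n => {x | ∀ j : Fin d, x (vtx j) = h (i, j)}) with hC
  -- inclusion into the union of cylinders
  have hsub : {S : Fin n → List Bool → Bool | ¬ (|(1 / (d : ℝ)) * ∑ j ∈ Finset.range d,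
            (1 / (n : ℝ)) * ∑ i : Fin n,
              ((if S i (pref b (j + 1)) then (1 : ℝ) else 0) - q (pref b (j + 1)))|
          < 1 / Real.sqrt n)}
      ⊆ ⋃ (h : K → Bool), (if cond h then C h else ∅) := by
    intro S hS
    simp only [Set.mem_setOf_eq, not_lt] at hS
    set g : K → Bool := fun k => S k.1 (vtx k.2) with hg
    -- rewrite the statement sum in terms of g
    have hTsum : ∑ j ∈ Finset.range d, (1 / (n : ℝ)) * ∑ i : Fin n,
              ((if S i (pref b (j + 1)) then (1 : ℝ) else 0) - q (pref b (j + 1)))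
        = (1 / (n : ℝ)) * ∑ k : K, (bval (g k) - p k) := by
      rw [Fintype.sum_prod_type, Finset.sum_comm, ← Finset.mul_sum]
      congr 1
      rw [← Fin.sum_univ_eq_sum_range (fun j => ∑ i : Fin n,
              ((if S i (pref b (j + 1)) then (1:ℝ) else 0) - q (pref b (j + 1)))) d]
      apply Finset.sum_congr rfl
      intro j _
      apply Finset.sum_congr rfl
      intro i _
      simp [bval, hg, hp, hvtx]
    rw [hTsum] at hS
    set T : ℝ := ∑ k : K, (bval (g k) - p k) with hT
    have hmu : Real.sqrt n * Real.sqrt n = (n:ℝ) := Real.mul_self_sqrt hn0.le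
    have habs : |1/(d:ℝ) * (1/(n:ℝ) * T)| = |T| / ((d:ℝ)*(n:ℝ)) := by
      rw [abs_mul, abs_mul, abs_of_pos (by positivity : (0:ℝ) < 1/(d:ℝ)),
        abs_of_pos (by positivity : (0:ℝ) < 1/(n:ℝ))]
      ring
    rw [habs] at hS
    have h1 : 1 * ((d:ℝ)*(n:ℝ)) ≤ |T| * Real.sqrt n := by
      rw [div_le_div_iff₀ hsn0 (by positivity)] at hS
      linarith
    have hcg : cond g := by
      simp only [hcond]
      nlinarith [abs_nonneg T]
    refine Set.mem_iUnion.mpr ⟨g, ?_⟩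
    rw [if_pos hcg]
    simp only [hC, Set.mem_pi, Set.mem_univ, forall_true_left, Set.mem_setOf_eq]
    intro i j
    trivial
  -- measurability of the inner cylinder sets
  have hmeas : ∀ (a : Fin d → Bool), MeasurableSet {x : List Bool → Bool | ∀ j, x (vtx j) = a j} := by
    intro a
    have : {x : List Bool → Bool | ∀ j, x (vtx j) = a j}
        = ⋂ j : Fin d, (fun x : List Bool → Bool => x (vtx j)) ⁻¹' {a j} := by
      ext x; simp [Set.mem_iInter]
    rw [this]
    exact MeasurableSet.iInter fun j => (measurable_pi_apply (vtx j)) (measurableSet_singleton _)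
  have hCmeas : ∀ h : K → Bool, M (C h) = ENNReal.ofReal (∏ k : K, wgt (p k) (h k)) := by
    intro h
    rw [hC, hM]
    simp only []
    rw [Measure.pi_pi]
    have : ∀ i : Fin n, μ {x | ∀ j : Fin d, x (vtx j) = h (i, j)}
        = ENNReal.ofReal (∏ j : Fin d, wgt (q (vtx j)) (h (i, j))) := by
      intro i
      exact cyl_measure q hq μ hμ vtx hvinj (fun j => h (i, j))
    rw [Finset.prod_congr rfl (fun i _ => this i),
      ← ENNReal.ofReal_prod_of_nonneg (fun i _ => Finset.prod_nonneg
        (fun j _ => wgt_nonneg (hq (vtx j)) _))]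
    congr 1
    rw [Fintype.prod_prod_type]
  -- put it together
  calc M {S | ¬ (|(1 / (d : ℝ)) * ∑ j ∈ Finset.range d,
            (1 / (n : ℝ)) * ∑ i : Fin n,
              ((if S i (pref b (j + 1)) then (1 : ℝ) else 0) - q (pref b (j + 1)))|
          < 1 / Real.sqrt n)}
      ≤ M (⋃ (h : K → Bool), (if cond h then C h else ∅)) := measure_mono hsub
    _ ≤ ∑' (h : K → Bool), M (if cond h then C h else ∅) := measure_iUnion_le _
    _ = ∑ h : K → Bool, M (if cond h then C h else ∅) := tsum_fintype _
    _ = ∑ h : K → Bool, (if cond h then ENNReal.ofReal (∏ k : K, wgt (p k) (h k)) else 0) := by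
        apply Finset.sum_congr rfl
        intro h _
        rw [apply_ite M, measure_empty, hCmeas h]
    _ = ENNReal.ofReal (∑ h : K → Bool,
          (if cond h then ∏ k : K, wgt (p k) (h k) else 0)) := by
        rw [ENNReal.ofReal_sum_of_nonneg]
        · apply Finset.sum_congr rfl
          intro h _
          rw [apply_ite ENNReal.ofReal, ENNReal.ofReal_zero]
        · intro h _
          split_ifs
          · exact Finset.prod_nonneg fun k _ => wgt_nonneg (hq (vtx k.2)) _
          · exact le_refl 0
    _ ≤ ENNReal.ofReal (2 * Real.exp (-(13/16) * d)) := by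
        apply ENNReal.ofReal_le_ofReal
        have hb := hoeff_abs p (fun k => hq (vtx k.2)) (1 / Real.sqrt n) ((d:ℝ) * Real.sqrt n)
          (by positivity) (by rw [div_le_one hsn0]; exact hsn1)
        have harith : -((1 / Real.sqrt n) * ((d:ℝ) * Real.sqrt n))
            + 3/16 * (1 / Real.sqrt n)^2 * (Fintype.card K : ℝ) = -(13/16) * d := by
          have hcard : (Fintype.card K : ℝ) = (n : ℝ) * d := by
            simp [K, Fintype.card_prod]
          rw [hcard, div_pow, one_pow, Real.sq_sqrt hn0.le]
          have hs : Real.sqrt n ≠ 0 := ne_of_gt hsn0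
          field_simp
          ring
        rw [harith] at hb
        exact hb


/-- Per-depth bound: union over all branches. -/
lemma depth_bound (q : List Bool → ℝ)
    (hq : ∀ v, q v ∈ Set.Icc (0 : ℝ) 1)
    (μ : Measure (List Bool → Bool)) (hμ : IsBernoulliProduct q μ)
    (n : ℕ) (hn : 1 ≤ n) (d : ℕ) (hd : 1 ≤ d) :
    (Measure.pi fun _ : Fin n => μ) {S | ∃ b : ℕ → Bool,
        ¬ (|(1 / (d : ℝ)) * ∑ j ∈ Finset.range d,
            (1 / (n : ℝ)) * ∑ i : Fin n,
              ((if S i (pref b (j + 1)) then (1 : ℝ) else 0) - q (pref b (j + 1)))|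
          < 1 / Real.sqrt n)}
      ≤ ENNReal.ofReal (2 * (2 * Real.exp (-(13/16)))^d) := by
  classical
  haveI : IsProbabilityMeasure μ := hμ.1
  set M := (Measure.pi fun _ : Fin n => μ) with hM
  set ext : (Fin d → Bool) → (ℕ → Bool) := fun c k => if h : k < d then c ⟨k, h⟩ else false
    with hext
  have hpref : ∀ (bb : ℕ → Bool) (j : ℕ), j < d →
      pref bb (j + 1) = pref (ext (fun jj : Fin d => bb jj)) (j + 1) := by
    intro bb j hj
    unfold pref
    congr 1
    funext k
    have hk : (k : ℕ) < d := lt_of_lt_of_le k.2 hj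
    simp [hext, hk]
  have hsub : {S : Fin n → List Bool → Bool | ∃ b : ℕ → Bool,
        ¬ (|(1 / (d : ℝ)) * ∑ j ∈ Finset.range d,
            (1 / (n : ℝ)) * ∑ i : Fin n,
              ((if S i (pref b (j + 1)) then (1 : ℝ) else 0) - q (pref b (j + 1)))|
          < 1 / Real.sqrt n)}
      ⊆ ⋃ (c : Fin d → Bool), {S | ¬ (|(1 / (d : ℝ)) * ∑ j ∈ Finset.range d,
            (1 / (n : ℝ)) * ∑ i : Fin n,
              ((if S i (pref (ext c) (j + 1)) then (1 : ℝ) else 0) - q (pref (ext c) (j + 1)))|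
          < 1 / Real.sqrt n)} := by
    rintro S ⟨b, hb⟩
    refine Set.mem_iUnion.mpr ⟨fun jj : Fin d => b jj, ?_⟩
    have hsame : ∑ j ∈ Finset.range d, (1 / (n : ℝ)) * ∑ i : Fin n,
              ((if S i (pref b (j + 1)) then (1 : ℝ) else 0) - q (pref b (j + 1)))
        = ∑ j ∈ Finset.range d, (1 / (n : ℝ)) * ∑ i : Fin n,
              ((if S i (pref (ext fun jj : Fin d => b jj) (j + 1)) then (1 : ℝ) else 0)
                - q (pref (ext fun jj : Fin d => b jj) (j + 1))) := by
      apply Finset.sum_congr rfl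
      intro j hj
      rw [← hpref b j (Finset.mem_range.mp hj)]
    simp only [Set.mem_setOf_eq]
    rw [← hsame]
    exact hb
  calc M _ ≤ M (⋃ (c : Fin d → Bool), {S | ¬ (|(1 / (d : ℝ)) * ∑ j ∈ Finset.range d,
            (1 / (n : ℝ)) * ∑ i : Fin n,
              ((if S i (pref (ext c) (j + 1)) then (1 : ℝ) else 0) - q (pref (ext c) (j + 1)))|
          < 1 / Real.sqrt n)}) := measure_mono hsub
    _ ≤ ∑' (c : Fin d → Bool), M {S | ¬ (|(1 / (d : ℝ)) * ∑ j ∈ Finset.range d,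
            (1 / (n : ℝ)) * ∑ i : Fin n,
              ((if S i (pref (ext c) (j + 1)) then (1 : ℝ) else 0) - q (pref (ext c) (j + 1)))|
          < 1 / Real.sqrt n)} := measure_iUnion_le _
    _ = ∑ c : Fin d → Bool, M {S | ¬ (|(1 / (d : ℝ)) * ∑ j ∈ Finset.range d,
            (1 / (n : ℝ)) * ∑ i : Fin n,
              ((if S i (pref (ext c) (j + 1)) then (1 : ℝ) else 0) - q (pref (ext c) (j + 1)))|
          < 1 / Real.sqrt n)} := tsum_fintype _
    _ ≤ ∑ _c : Fin d → Bool, ENNReal.ofReal (2 * Real.exp (-(13/16) * d)) := by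
        apply Finset.sum_le_sum
        intro c _
        exact branch_bound q hq μ hμ n hn d hd (ext c)
    _ = ENNReal.ofReal (2 * (2 * Real.exp (-(13/16)))^d) := by
        rw [Finset.sum_const, Finset.card_univ]
        have hcard : Fintype.card (Fin d → Bool) = 2 ^ d := by
          simp [Fintype.card_fun]
        rw [hcard, nsmul_eq_mul]
        have hc2 : ((2 ^ d : ℕ) : ℝ≥0∞) = ENNReal.ofReal ((2 : ℝ) ^ d) := by
          rw [ENNReal.ofReal_pow (by norm_num : (0:ℝ) ≤ 2)]
          norm_num
        rw [hc2, ← ENNReal.ofReal_mul (by positivity)]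
        congr 1
        rw [mul_pow, ← Real.exp_nat_mul]
        ring_nf

/-- For any `q ∈ [0,1]^V` (`V` the vertices of the infinite binary tree) and `n ≥ 1`
i.i.d. samples from `Prod q`: almost surely there is a depth `d₀` such that for all
`d > d₀`, uniformly over all branches, the averaged empirical deviation along the first
`d` levels of the branch is less than `1/√n`. -/
theorem tree_uniform_deviation (q : List Bool → ℝ)
    (hq : ∀ v, q v ∈ Set.Icc (0 : ℝ) 1)
    (μ : Measure (List Bool → Bool)) (hμ : IsBernoulliProduct q μ)
    (n : ℕ) (hn : 1 ≤ n) :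
    ∀ᵐ S ∂(Measure.pi fun _ : Fin n => μ),
      ∃ d₀ : ℕ, ∀ d > d₀, ∀ b : ℕ → Bool,
        |(1 / (d : ℝ)) * ∑ j ∈ Finset.range d,
            (1 / (n : ℝ)) * ∑ i : Fin n,
              ((if S i (pref b (j + 1)) then (1 : ℝ) else 0) - q (pref b (j + 1)))|
          < 1 / Real.sqrt n := by
  classical
  haveI : IsProbabilityMeasure μ := hμ.1
  set M := (Measure.pi fun _ : Fin n => μ) with hM
  set s : ℕ → Set (Fin n → List Bool → Bool) := fun d =>
    {S | ∃ b : ℕ → Bool, ¬ (|(1 / (d : ℝ)) * ∑ j ∈ Finset.range d,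
            (1 / (n : ℝ)) * ∑ i : Fin n,
              ((if S i (pref b (j + 1)) then (1 : ℝ) else 0) - q (pref b (j + 1)))|
          < 1 / Real.sqrt n)} with hs
  set r : ℝ := 2 * Real.exp (-(13/16)) with hr
  have hr0 : 0 < r := by positivity
  have hr1 : r < 1 := by
    have h2 : (2:ℝ) < Real.exp (13/16) := by
      have hl := Real.log_two_lt_d9
      calc (2:ℝ) = Real.exp (Real.log 2) := (Real.exp_log (by norm_num)).symm
        _ < Real.exp (13/16) := Real.exp_lt_exp.mpr (by norm_num at hl ⊢; linarith)
    have hd2 : (2:ℝ) / Real.exp (13/16) < 1 := (div_lt_one (Real.exp_pos _)).mpr h2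
    rw [hr, Real.exp_neg]
    rw [div_eq_mul_inv] at hd2
    exact hd2
  have hbound : ∀ d : ℕ, 1 ≤ d → M (s d) ≤ ENNReal.ofReal (2 * r ^ d) := by
    intro d hd
    exact depth_bound q hq μ hμ n hn d hd
  set R : ℝ≥0∞ := ENNReal.ofReal r with hR
  have hR1 : R < 1 := ENNReal.ofReal_lt_one.mpr hr1
  have hzero : M {S | ∀ d₀ : ℕ, ∃ d, d₀ < d ∧ S ∈ s d} = 0 := by
    set Bad := {S : Fin n → List Bool → Bool | ∀ d₀ : ℕ, ∃ d, d₀ < d ∧ S ∈ s d} with hBad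
    have key : ∀ d₀ : ℕ, M Bad ≤ ENNReal.ofReal 2 * R ^ (d₀ + 1) * (1 - R)⁻¹ := by
      intro d₀
      have hsub : Bad ⊆ ⋃ k : ℕ, s (d₀ + 1 + k) := by
        intro S hS
        obtain ⟨d, hd, hmem⟩ := hS d₀
        exact Set.mem_iUnion.mpr ⟨d - (d₀ + 1),
          by rwa [show d₀ + 1 + (d - (d₀ + 1)) = d by omega]⟩
      have hterm : ∀ k : ℕ, M (s (d₀ + 1 + k)) ≤ ENNReal.ofReal 2 * R ^ (d₀ + 1) * R ^ k := by
        intro k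
        have h1 := hbound (d₀ + 1 + k) (by omega)
        have h2 : ENNReal.ofReal (2 * r ^ (d₀ + 1 + k))
            = ENNReal.ofReal 2 * R ^ (d₀ + 1) * R ^ k := by
          have hre : 2 * r ^ (d₀ + 1 + k) = 2 * r ^ (d₀ + 1) * r ^ k := by
            rw [pow_add]; ring
          rw [hre, ENNReal.ofReal_mul (by positivity), ENNReal.ofReal_mul (by norm_num : (0:ℝ) ≤ 2),
            ENNReal.ofReal_pow hr0.le, ENNReal.ofReal_pow hr0.le, hR]
        rw [← h2]
        exact h1
      calc M Bad ≤ M (⋃ k : ℕ, s (d₀ + 1 + k)) := measure_mono hsub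
        _ ≤ ∑' k : ℕ, M (s (d₀ + 1 + k)) := measure_iUnion_le _
        _ ≤ ∑' k : ℕ, ENNReal.ofReal 2 * R ^ (d₀ + 1) * R ^ k :=
            ENNReal.tsum_le_tsum hterm
        _ = ENNReal.ofReal 2 * R ^ (d₀ + 1) * (1 - R)⁻¹ := by
            rw [ENNReal.tsum_mul_left, ENNReal.tsum_geometric]
    have htend : Tendsto (fun d₀ : ℕ => ENNReal.ofReal 2 * R ^ (d₀ + 1) * (1 - R)⁻¹)
        atTop (𝓝 0) := by
      have h1 : Tendsto (fun d₀ : ℕ => R ^ (d₀ + 1)) atTop (𝓝 0) :=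
        (ENNReal.tendsto_pow_atTop_nhds_zero_of_lt_one hR1).comp (tendsto_add_atTop_nat 1)
      have h2 : Tendsto (fun d₀ : ℕ => ENNReal.ofReal 2 * R ^ (d₀ + 1)) atTop
          (𝓝 (ENNReal.ofReal 2 * 0)) :=
        ENNReal.Tendsto.const_mul h1 (Or.inr ENNReal.ofReal_ne_top)
      rw [mul_zero] at h2
      have h3 := ENNReal.Tendsto.mul_const h2
        (Or.inr (ENNReal.inv_ne_top.mpr (fun h0 => not_le.mpr hR1 (tsub_eq_zero_iff_le.mp h0))))
      simpa using h3
    have hle : M Bad ≤ 0 := ge_of_tendsto' htend key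
    exact le_antisymm hle zero_le
  have hae : ∀ᵐ S ∂M, S ∉ {S : Fin n → List Bool → Bool | ∀ d₀ : ℕ, ∃ d, d₀ < d ∧ S ∈ s d} :=
    measure_eq_zero_iff_ae_notMem.mp hzero
  filter_upwards [hae] with S hS
  simp only [Set.mem_setOf_eq, not_forall, not_exists, not_and] at hS
  obtain ⟨d₀, h⟩ := hS
  refine ⟨d₀, fun d hd b => ?_⟩
  by_contra hc
  exact h d hd ⟨b, hc⟩
end Aux
end

section
/- Let b* ∈ {0,1}^ℕ, let μ = Prod(q^{b*}) ∈ Q_tree, and let X^(1),…,X^(n) be n ≥ 36 i.i.d. samples from μ. For a branch b ∈ {0,1}^ℕ define φ(b) = liminf_{d→∞} (1/d) Σ_{j=1}^d (1/n) Σ_{i=1}^n X^(i)_{(b_1,…,b_j)}, where (b_1,…,b_j) is the length-j prefix of b. Then with probability 1: φ(b*) = 2/3 and φ(b) ≤ 1/2 for every branch b ≠ b*; in particular b* is the unique branch with φ(b) = 2/3. -/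
open MeasureTheory Filter

/-- The mean vector of the tree distribution associated to the branch `b`:
value `2/3` at every vertex lying on the branch (every prefix of `b`, including the
root), and `1/3` at every other vertex. -/
noncomputable def qBranch (b : ℕ → Bool) : List Bool → ℝ :=
  fun v => if pref b v.length = v then 2 / 3 else 1 / 3

/-- `φ(b)`: the liminf, over the depth `d`, of the average along the first `d` vertices
of the branch `b` of the empirical means computed from the `n` samples `S`. -/
noncomputable def phi (n : ℕ) (S : Fin n → (List Bool → Bool)) (b : ℕ → Bool) : ℝ :=
  Filter.liminf
    (fun d : ℕ => (1 / (d : ℝ)) * ∑ j ∈ Finset.range d,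
      (1 / (n : ℝ)) * ∑ i : Fin n, (if S i (pref b (j + 1)) then (1 : ℝ) else 0))
    Filter.atTop

namespace TreeProof
open Finset Real

variable {q : List Bool → ℝ} {μ : Measure (List Bool → Bool)} {n : ℕ}

/-- number of `true`s among the coordinates `(i, v)`, `i : Fin n`, `v ∈ V`. -/
def cnt (n : ℕ) (V : Finset (List Bool)) (S : Fin n → (List Bool → Bool)) : ℕ :=
  ∑ i : Fin n, ∑ v ∈ V, (if S i v then 1 else 0)

noncomputable def wt (q : List Bool → ℝ) (n : ℕ) (V : Finset (List Bool))
    (T : Finset (Fin n × List Bool)) : ℝ :=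
  ∏ a ∈ Finset.univ ×ˢ V, (if a ∈ T then q a.2 else 1 - q a.2)

def rect (n : ℕ) (V : Finset (List Bool)) (T : Finset (Fin n × List Bool)) :
    Set (Fin n → (List Bool → Bool)) :=
  {S | ∀ i : Fin n, ∀ v ∈ V, S i v = decide ((i, v) ∈ T)}

lemma measurable_rect (V : Finset (List Bool)) (T : Finset (Fin n × List Bool)) :
    MeasurableSet (rect n V T) := by
  have : rect n V T = ⋂ i : Fin n, ⋂ v ∈ V, {S : Fin n → (List Bool → Bool) |
      S i v = decide ((i, v) ∈ T)} := by
    ext S; simp [rect, Set.mem_iInter]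
  rw [this]
  refine MeasurableSet.iInter fun i => MeasurableSet.biInter V.countable_toSet fun v _ => ?_
  have : Measurable fun S : Fin n → (List Bool → Bool) => S i v :=
    (measurable_pi_apply v).comp (measurable_pi_apply i)
  exact this (MeasurableSet.of_discrete (s := {decide ((i, v) ∈ T)}))

lemma measure_rect (hμ : IsBernoulliProduct q μ) (hq : ∀ v, 0 ≤ q v ∧ q v ≤ 1)
    (V : Finset (List Bool)) (T : Finset (Fin n × List Bool)) :
    (Measure.pi fun _ : Fin n => μ) (rect n V T) = ENNReal.ofReal (wt q n V T) := by
  haveI := hμ.1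
  have h1 : rect n V T = Set.pi Set.univ
      (fun i => {x : List Bool → Bool | ∀ v ∈ V, x v = decide ((i, v) ∈ T)}) := by
    ext S; simp [rect, Set.mem_pi]
  rw [h1, Measure.pi_pi]
  have h2 : ∀ i : Fin n, μ {x : List Bool → Bool | ∀ v ∈ V, x v = decide ((i, v) ∈ T)}
      = ENNReal.ofReal (∏ v ∈ V, if (i, v) ∈ T then q v else 1 - q v) := by
    intro i
    rw [hμ.2 V (fun v => decide ((i, v) ∈ T)), ← ENNReal.ofReal_prod_of_nonneg]
    · congr 1; refine Finset.prod_congr rfl fun v _ => ?_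
      by_cases h : (i, v) ∈ T <;> simp [h]
    · intro v hv
      by_cases h : (i, v) ∈ T <;> simp [h, (hq v).1, (hq v).2, sub_nonneg]
  simp_rw [h2]
  rw [← ENNReal.ofReal_prod_of_nonneg]
  · rw [wt, Finset.prod_product]
  · intro i _
    refine Finset.prod_nonneg fun v hv => ?_
    by_cases h : (i, v) ∈ T <;> simp [h, (hq v).1, (hq v).2, sub_nonneg]

lemma cnt_rect {V : Finset (List Bool)} {T : Finset (Fin n × List Bool)}
    (hT : T ⊆ Finset.univ ×ˢ V) {S : Fin n → (List Bool → Bool)} (hS : S ∈ rect n V T) :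
    cnt n V S = T.card := by
  have : cnt n V S = ∑ a ∈ Finset.univ ×ˢ V, (if a ∈ T then 1 else 0) := by
    rw [Finset.sum_product]
    refine Finset.sum_congr rfl fun i _ => Finset.sum_congr rfl fun v hv => ?_
    rw [hS i v hv]
    by_cases h : (i, v) ∈ T <;> simp [h]
  rw [this, Finset.sum_ite_mem, Finset.sum_const, smul_eq_mul, mul_one,
    Finset.inter_eq_right.2 hT]

lemma event_eq_biUnion (V : Finset (List Bool)) (P : ℕ → Prop) [DecidablePred P] :
    {S : Fin n → (List Bool → Bool) | P (cnt n V S)} =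
      ⋃ T ∈ (Finset.univ ×ˢ V).powerset.filter (fun T => P T.card), rect n V T := by
  ext S
  simp only [Set.mem_setOf_eq, Set.mem_iUnion, Finset.mem_filter, Finset.mem_powerset]
  constructor
  · intro hP
    refine ⟨(Finset.univ ×ˢ V).filter (fun a => S a.1 a.2), ⟨Finset.filter_subset _ _, ?_⟩, ?_⟩
    · have hmem : S ∈ rect n V ((Finset.univ ×ˢ V).filter (fun a => S a.1 a.2)) := by
        intro i v hv
        by_cases h : S i v <;> simp [h, Finset.mem_filter, hv]
      rwa [← cnt_rect (Finset.filter_subset _ _) hmem]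
    · intro i v hv
      by_cases h : S i v <;> simp [h, Finset.mem_filter, hv]
  · rintro ⟨T, ⟨hT, hP⟩, hS⟩
    rwa [cnt_rect hT hS]

lemma measure_event (hμ : IsBernoulliProduct q μ) (hq : ∀ v, 0 ≤ q v ∧ q v ≤ 1)
    (V : Finset (List Bool)) (P : ℕ → Prop) [DecidablePred P] :
    (Measure.pi fun _ : Fin n => μ) {S | P (cnt n V S)} =
      ENNReal.ofReal (∑ T ∈ (Finset.univ ×ˢ V).powerset.filter (fun T => P T.card),
        wt q n V T) := by
  rw [event_eq_biUnion, measure_biUnion_finset, ENNReal.ofReal_sum_of_nonneg]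
  · exact Finset.sum_congr rfl fun T _ => measure_rect hμ hq V T
  · intro T hT
    refine Finset.prod_nonneg fun a _ => ?_
    by_cases h : a ∈ T <;> simp [h, (hq a.2).1, (hq a.2).2, sub_nonneg]
  · -- pairwise disjoint
    intro T hT T' hT' hne
    simp only [Finset.coe_filter, Set.mem_setOf_eq, Finset.mem_powerset] at hT hT'
    refine Set.disjoint_left.2 fun S hS hS' => hne ?_
    apply Finset.ext
    intro a
    constructor
    · intro haT
      have hav : a ∈ Finset.univ ×ˢ V := hT.1 haT
      have hv : a.2 ∈ V := (Finset.mem_product.1 hav).2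
      have e1 := hS a.1 a.2 hv
      have e2 := hS' a.1 a.2 hv
      rw [e1] at e2
      simp only [decide_eq_decide] at e2
      exact e2.mp haT
    · intro haT'
      have hav : a ∈ Finset.univ ×ˢ V := hT'.1 haT'
      have hv : a.2 ∈ V := (Finset.mem_product.1 hav).2
      have e1 := hS a.1 a.2 hv
      have e2 := hS' a.1 a.2 hv
      rw [e1] at e2
      simp only [decide_eq_decide] at e2
      exact e2.mpr haT'
  · exact fun T _ => measurable_rect V T


lemma wt_nonneg (hq : ∀ v, 0 ≤ q v ∧ q v ≤ 1) (V : Finset (List Bool))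
    (T : Finset (Fin n × List Bool)) : 0 ≤ wt q n V T := by
  refine Finset.prod_nonneg fun a _ => ?_
  by_cases h : a ∈ T <;> simp [h, (hq a.2).1, (hq a.2).2, sub_nonneg]

lemma wt_eq_prod {V : Finset (List Bool)} {T : Finset (Fin n × List Bool)}
    (hT : T ⊆ Finset.univ ×ˢ V) :
    wt q n V T = (∏ a ∈ T, q a.2) * ∏ a ∈ (Finset.univ ×ˢ V) \ T, (1 - q a.2) := by
  rw [wt, ← Finset.prod_filter_mul_prod_filter_not (Finset.univ ×ˢ V) (fun a => a ∈ T)]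
  have h1 : (Finset.univ ×ˢ V).filter (fun a => a ∈ T) = T := by
    rw [Finset.filter_mem_eq_inter, Finset.inter_eq_right.2 hT]
  have h2 : (Finset.univ ×ˢ V).filter (fun a => a ∉ T) = (Finset.univ ×ˢ V) \ T :=
    (Finset.sdiff_eq_filter _ _).symm
  rw [h1, h2]
  exact congrArg₂ (· * ·) (Finset.prod_congr rfl fun a ha => by simp [ha])
    (Finset.prod_congr rfl fun a ha => by simp [(Finset.mem_sdiff.1 ha).2])

lemma chernoff_upper (hq : ∀ v, 0 ≤ q v ∧ q v ≤ 1) (V : Finset (List Bool)) (m : ℕ)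
    {r : ℝ} (hr : 1 ≤ r) :
    (∑ T ∈ (Finset.univ ×ˢ V).powerset.filter (fun T => m ≤ T.card), wt q n V T) * r ^ m
      ≤ ∏ a ∈ (Finset.univ : Finset (Fin n)) ×ˢ V, (q a.2 * r + (1 - q a.2)) := by
  have hr0 : (0:ℝ) ≤ r := le_trans zero_le_one hr
  rw [Finset.prod_add, Finset.sum_mul]
  refine le_trans (Finset.sum_le_sum ?_)
    (Finset.sum_le_sum_of_subset_of_nonneg (Finset.filter_subset _ _) ?_)
  · intro T hT
    rw [Finset.mem_filter, Finset.mem_powerset] at hT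
    rw [wt_eq_prod hT.1]
    have hsplit : ∏ a ∈ T, (q a.2 * r) = (∏ a ∈ T, q a.2) * r ^ T.card := by
      rw [Finset.prod_mul_distrib, Finset.prod_const]
    rw [hsplit]
    have h1 : (0:ℝ) ≤ (∏ a ∈ T, q a.2) * ∏ a ∈ (Finset.univ ×ˢ V) \ T, (1 - q a.2) :=
      mul_nonneg (Finset.prod_nonneg fun a _ => (hq a.2).1)
        (Finset.prod_nonneg fun a _ => by simp [sub_nonneg, (hq a.2).2])
    calc (∏ a ∈ T, q a.2) * (∏ a ∈ (Finset.univ ×ˢ V) \ T, (1 - q a.2)) * r ^ m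
        ≤ (∏ a ∈ T, q a.2) * (∏ a ∈ (Finset.univ ×ˢ V) \ T, (1 - q a.2)) * r ^ T.card :=
          mul_le_mul_of_nonneg_left (pow_le_pow_right₀ hr hT.2) h1
      _ = (∏ a ∈ T, q a.2) * r ^ T.card * ∏ a ∈ (Finset.univ ×ˢ V) \ T, (1 - q a.2) := by ring
  · intro T hT _
    rw [Finset.mem_powerset] at hT
    refine mul_nonneg (Finset.prod_nonneg fun a _ => mul_nonneg (hq a.2).1 hr0)
      (Finset.prod_nonneg fun a _ => by simp [sub_nonneg, (hq a.2).2])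

lemma chernoff_lower (hq : ∀ v, 0 ≤ q v ∧ q v ≤ 1) (V : Finset (List Bool)) (m : ℕ)
    {r : ℝ} (hr0 : 0 < r) (hr : r ≤ 1) :
    (∑ T ∈ (Finset.univ ×ˢ V).powerset.filter (fun T => T.card ≤ m), wt q n V T) * r ^ m
      ≤ ∏ a ∈ (Finset.univ : Finset (Fin n)) ×ˢ V, (q a.2 * r + (1 - q a.2)) := by
  rw [Finset.prod_add, Finset.sum_mul]
  refine le_trans (Finset.sum_le_sum ?_)
    (Finset.sum_le_sum_of_subset_of_nonneg (Finset.filter_subset _ _) ?_)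
  · intro T hT
    rw [Finset.mem_filter, Finset.mem_powerset] at hT
    rw [wt_eq_prod hT.1]
    have hsplit : ∏ a ∈ T, (q a.2 * r) = (∏ a ∈ T, q a.2) * r ^ T.card := by
      rw [Finset.prod_mul_distrib, Finset.prod_const]
    rw [hsplit]
    have h1 : (0:ℝ) ≤ (∏ a ∈ T, q a.2) * ∏ a ∈ (Finset.univ ×ˢ V) \ T, (1 - q a.2) :=
      mul_nonneg (Finset.prod_nonneg fun a _ => (hq a.2).1)
        (Finset.prod_nonneg fun a _ => by simp [sub_nonneg, (hq a.2).2])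
    calc (∏ a ∈ T, q a.2) * (∏ a ∈ (Finset.univ ×ˢ V) \ T, (1 - q a.2)) * r ^ m
        ≤ (∏ a ∈ T, q a.2) * (∏ a ∈ (Finset.univ ×ˢ V) \ T, (1 - q a.2)) * r ^ T.card :=
          mul_le_mul_of_nonneg_left (pow_le_pow_of_le_one hr0.le hr hT.2) h1
      _ = (∏ a ∈ T, q a.2) * r ^ T.card * ∏ a ∈ (Finset.univ ×ˢ V) \ T, (1 - q a.2) := by ring
  · intro T hT _
    rw [Finset.mem_powerset] at hT
    refine mul_nonneg (Finset.prod_nonneg fun a _ => mul_nonneg (hq a.2).1 hr0.le)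
      (Finset.prod_nonneg fun a _ => by simp [sub_nonneg, (hq a.2).2])

/-- Combined Chernoff bound, upper-tail version, for constant `p` on `V`. -/
lemma measure_upper_le (hμ : IsBernoulliProduct q μ) (hq : ∀ v, 0 ≤ q v ∧ q v ≤ 1)
    {V : Finset (List Bool)} {p : ℝ} (hp : ∀ v ∈ V, q v = p) (m : ℕ)
    {r : ℝ} (hr : 1 ≤ r) :
    (Measure.pi fun _ : Fin n => μ) {S | m ≤ cnt n V S} ≤
      ENNReal.ofReal ((p * r + (1 - p)) ^ (n * V.card) / r ^ m) := by
  have hr0 : (0:ℝ) < r := lt_of_lt_of_le zero_lt_one hr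
  rw [measure_event hμ hq V (fun c => m ≤ c)]
  refine ENNReal.ofReal_le_ofReal ?_
  rw [le_div_iff₀ (by positivity)]
  refine le_trans (chernoff_upper hq V m hr) ?_
  rw [Finset.prod_congr rfl (fun a (ha : a ∈ Finset.univ ×ˢ V) => by
        rw [hp a.2 (Finset.mem_product.1 ha).2]),
    Finset.prod_const, Finset.card_product, Finset.card_univ, Fintype.card_fin]

/-- Combined Chernoff bound, lower-tail version, for constant `p` on `V`. -/
lemma measure_lower_le (hμ : IsBernoulliProduct q μ) (hq : ∀ v, 0 ≤ q v ∧ q v ≤ 1)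
    {V : Finset (List Bool)} {p : ℝ} (hp : ∀ v ∈ V, q v = p) (m : ℕ)
    {r : ℝ} (hr0 : 0 < r) (hr : r ≤ 1) :
    (Measure.pi fun _ : Fin n => μ) {S | cnt n V S ≤ m} ≤
      ENNReal.ofReal ((p * r + (1 - p)) ^ (n * V.card) / r ^ m) := by
  rw [measure_event hμ hq V (fun c => c ≤ m)]
  refine ENNReal.ofReal_le_ofReal ?_
  rw [le_div_iff₀ (by positivity)]
  refine le_trans (chernoff_lower hq V m hr0 hr) ?_
  rw [Finset.prod_congr rfl (fun a (ha : a ∈ Finset.univ ×ˢ V) => by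
        rw [hp a.2 (Finset.mem_product.1 ha).2]),
    Finset.prod_const, Finset.card_product, Finset.card_univ, Fintype.card_fin]



lemma log_ge_aux {ε : ℝ} (hε : 0 < ε) : ε / (1 + ε) ≤ Real.log (1 + ε) := by
  have h := Real.log_le_sub_one_of_pos (x := (1+ε)⁻¹) (by positivity)
  rw [Real.log_inv] at h
  have : (1+ε)⁻¹ - 1 = -(ε/(1+ε)) := by field_simp; ring
  rw [this] at h
  linarith

lemma cup_lt_one {ε : ℝ} (hε : 0 < ε) : (1 + 2*ε/3) * (1+ε) ^ (-(2/3+ε) : ℝ) < 1 := by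
  have h0 : (0:ℝ) < (1 + 2*ε/3) * (1+ε) ^ (-(2/3+ε) : ℝ) := by positivity
  refine (Real.log_neg_iff h0).mp ?_
  rw [Real.log_mul (by positivity) (by positivity), Real.log_rpow (by positivity)]
  have h1 : Real.log (1 + 2*ε/3) < 2*ε/3 := by
    have := Real.log_lt_sub_one_of_pos (x := 1 + 2*ε/3) (by positivity) (by intro h; nlinarith)
    linarith
  have h2 : ε / (1+ε) ≤ Real.log (1+ε) := log_ge_aux hε
  have h3 : (2/3+ε) * (ε/(1+ε)) ≤ (2/3+ε) * Real.log (1+ε) :=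
    mul_le_mul_of_nonneg_left h2 (by linarith)
  have h4 : 2*ε/3 ≤ (2/3+ε) * (ε/(1+ε)) := by
    have he : (2/3+ε) * (ε/(1+ε)) = ((2/3+ε)*ε)/(1+ε) := by ring
    rw [he, le_div_iff₀ (by positivity)]
    nlinarith
  nlinarith

lemma clow_lt_one {ε : ℝ} (hε : 0 < ε) (hε2 : ε ≤ 1/2) :
    (1 - 2*ε/3) * (1-ε) ^ (-(2/3-ε) : ℝ) < 1 := by
  have hε1 : ε < 1 := by linarith
  have hb : (0:ℝ) < 1 - ε := by linarith
  have h0 : (0:ℝ) < (1 - 2*ε/3) * (1-ε) ^ (-(2/3-ε) : ℝ) := by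
    have : (0:ℝ) < 1 - 2*ε/3 := by linarith
    positivity
  refine (Real.log_neg_iff h0).mp ?_
  rw [Real.log_mul (by nlinarith) (by positivity), Real.log_rpow hb]
  have h1 : Real.log (1 - 2*ε/3) < -(2*ε/3) := by
    have := Real.log_lt_sub_one_of_pos (x := 1 - 2*ε/3) (by linarith) (by intro h; nlinarith)
    linarith
  have h2 : -Real.log (1-ε) ≤ ε/(1-ε) := by
    have h := Real.log_le_sub_one_of_pos (x := (1-ε)⁻¹) (by positivity)
    rw [Real.log_inv] at h
    have : (1-ε)⁻¹ - 1 = ε/(1-ε) := by field_simp; ring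
    linarith [this ▸ h]
  have hβ : (0:ℝ) ≤ 2/3 - ε := by linarith
  have h3 : -(2/3-ε) * Real.log (1-ε) ≤ (2/3-ε) * (ε/(1-ε)) := by
    have := mul_le_mul_of_nonneg_left h2 hβ
    nlinarith [this]
  have h4 : (2/3-ε) * (ε/(1-ε)) ≤ 2*ε/3 := by
    have he : (2/3-ε) * (ε/(1-ε)) = ((2/3-ε)*ε)/(1-ε) := by ring
    rw [he, div_le_iff₀ hb]
    nlinarith
  linarith

lemma off_num {n : ℕ} (hn : 36 ≤ n) (D : ℕ) :
    (4/3:ℝ) ^ (n*D) / 2 ^ (n*D/2 + 1) ≤ ((8:ℝ)/9) ^ (18*D) := by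
  have hL : (0:ℝ) ≤ (4/3:ℝ)^(n*D) / 2^(n*D/2+1) := by positivity
  have hR : (0:ℝ) ≤ ((8:ℝ)/9)^(18*D) := by positivity
  have key : ((4/3:ℝ)^(n*D) / 2^(n*D/2+1))^2 ≤ (((8:ℝ)/9)^(18*D))^2 := by
    have h2m : n*D ≤ (n*D/2+1)*2 := by omega
    have e1 : ((4/3:ℝ)^(n*D) / 2^(n*D/2+1))^2 = (4/3:ℝ)^(n*D*2) / 2^((n*D/2+1)*2) := by
      rw [div_pow, ← pow_mul, ← pow_mul]
    have e2 : (((8:ℝ)/9)^(18*D))^2 = ((8:ℝ)/9)^(36*D) := by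
      rw [← pow_mul]; ring_nf
    rw [e1, e2]
    calc (4/3:ℝ)^(n*D*2) / 2^((n*D/2+1)*2)
        ≤ (4/3:ℝ)^(n*D*2) / 2^(n*D) := by
          refine div_le_div_of_nonneg_left (by positivity) (by positivity) ?_
          exact pow_le_pow_right₀ one_le_two h2m
      _ = ((8:ℝ)/9)^(n*D) := by
          rw [mul_comm (n*D) 2, pow_mul, ← div_pow]
          norm_num
      _ ≤ ((8:ℝ)/9)^(36*D) := by
          refine pow_le_pow_of_le_one (by norm_num) (by norm_num) ?_
          exact Nat.mul_le_mul_right D hn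
  exact (pow_le_pow_iff_left₀ hL hR two_ne_zero).mp key

lemma rho_lt_one : 2*((8:ℝ)/9)^18 < 1 := by
  have h : (2:ℝ)*((8:ℝ)/9)^18 = 2*8^18/9^18 := by rw [div_pow]; ring
  rw [h, div_lt_one (by positivity)]
  norm_num

lemma up_pack {N : ℕ} {ε : ℝ} (hε : 0 < ε) :
    ((2/3)*(1+ε) + (1 - 2/3) : ℝ) ^ N / (1+ε) ^ ⌈(2/3+ε)*(N:ℝ)⌉₊
      ≤ ((1 + 2*ε/3) * (1+ε) ^ (-(2/3+ε) : ℝ)) ^ N := by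
  have hr1 : (1:ℝ) ≤ 1+ε := by linarith
  have hr0 : (0:ℝ) < 1+ε := by linarith
  have hB : ((2/3)*(1+ε) + (1 - 2/3) : ℝ) = 1 + 2*ε/3 := by ring
  have hBpos : (0:ℝ) ≤ (1 + 2*ε/3)^N := by positivity
  have key : ((1+ε):ℝ) ^ (((2:ℝ)/3+ε)*(N:ℝ)) ≤ (1+ε) ^ ((⌈(2/3+ε)*(N:ℝ)⌉₊ : ℕ) : ℝ) :=
    Real.rpow_le_rpow_of_exponent_le hr1 (Nat.le_ceil _)
  rw [hB, div_eq_mul_inv, mul_pow]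
  refine mul_le_mul_of_nonneg_left ?_ hBpos
  have e1 : ((1+ε):ℝ) ^ (⌈(2/3+ε)*(N:ℝ)⌉₊ : ℕ) = (1+ε) ^ ((⌈(2/3+ε)*(N:ℝ)⌉₊ : ℕ) : ℝ) :=
    (Real.rpow_natCast _ _).symm
  have e2 : (((1+ε):ℝ) ^ (-(2/3+ε) : ℝ)) ^ N = (1+ε) ^ ((-(2/3+ε))*(N:ℝ)) := by
    rw [← Real.rpow_natCast (((1+ε):ℝ) ^ (-(2/3+ε) : ℝ)) N, ← Real.rpow_mul hr0.le]
  rw [e1, e2, ← Real.rpow_neg hr0.le]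
  refine Real.rpow_le_rpow_of_exponent_le hr1 ?_
  have := Nat.le_ceil ((2/3+ε)*(N:ℝ))
  linarith

lemma low_pack {N : ℕ} {ε : ℝ} (hε : 0 < ε) (hε2 : ε ≤ 1/2) :
    ((2/3)*(1-ε) + (1 - 2/3) : ℝ) ^ N / (1-ε) ^ ⌊(2/3-ε)*(N:ℝ)⌋₊
      ≤ ((1 - 2*ε/3) * (1-ε) ^ (-(2/3-ε) : ℝ)) ^ N := by
  have hr0 : (0:ℝ) < 1-ε := by linarith
  have hr1 : (1-ε:ℝ) ≤ 1 := by linarith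
  have hB : ((2/3)*(1-ε) + (1 - 2/3) : ℝ) = 1 - 2*ε/3 := by ring
  have hBpos : (0:ℝ) ≤ (1 - 2*ε/3)^N := pow_nonneg (by linarith) N
  have hfl : ((⌊(2/3-ε)*(N:ℝ)⌋₊ : ℕ) : ℝ) ≤ (2/3-ε)*(N:ℝ) :=
    Nat.floor_le (mul_nonneg (by linarith) (Nat.cast_nonneg N))
  have key : ((1-ε):ℝ) ^ (((2:ℝ)/3-ε)*(N:ℝ)) ≤ (1-ε) ^ ((⌊(2/3-ε)*(N:ℝ)⌋₊ : ℕ) : ℝ) :=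
    Real.rpow_le_rpow_of_exponent_ge hr0 hr1 hfl
  rw [hB, div_eq_mul_inv, mul_pow]
  refine mul_le_mul_of_nonneg_left ?_ hBpos
  have e1 : ((1-ε):ℝ) ^ (⌊(2/3-ε)*(N:ℝ)⌋₊ : ℕ) = (1-ε) ^ ((⌊(2/3-ε)*(N:ℝ)⌋₊ : ℕ) : ℝ) :=
    (Real.rpow_natCast _ _).symm
  have e2 : (((1-ε):ℝ) ^ (-(2/3-ε) : ℝ)) ^ N = (1-ε) ^ ((-(2/3-ε))*(N:ℝ)) := by
    rw [← Real.rpow_natCast (((1-ε):ℝ) ^ (-(2/3-ε) : ℝ)) N, ← Real.rpow_mul hr0.le]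
  rw [e1, e2, ← Real.rpow_neg hr0.le]
  refine Real.rpow_le_rpow_of_exponent_ge hr0 hr1 ?_
  linarith



lemma length_pref (b : ℕ → Bool) (j : ℕ) : (pref b j).length = j := List.length_ofFn

lemma pref_inj (b : ℕ → Bool) : Function.Injective (pref b) := by
  intro j j' h
  have := congrArg List.length h
  simpa [length_pref] using this

lemma pref_take (b : ℕ → Bool) {m j : ℕ} (h : m ≤ j) : (pref b j).take m = pref b m := by
  apply List.ext_getElem
  · simp [length_pref, h]
  · intro i h1 h2
    simp [pref, List.getElem_take]

lemma pref_ne {b b' : ℕ → Bool} {k m : ℕ} (hk : k < m) (hne : b k ≠ b' k) :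
    pref b m ≠ pref b' m := by
  intro h
  rw [pref, pref, List.ofFn_inj] at h
  exact hne (congrFun h ⟨k, hk⟩)

lemma qBranch_mem (bstar : ℕ → Bool) (j : ℕ) : qBranch bstar (pref bstar j) = 2/3 := by
  rw [qBranch, length_pref]
  simp

lemma qBranch_bounds (bstar : ℕ → Bool) :
    ∀ v, 0 ≤ qBranch bstar v ∧ qBranch bstar v ≤ 1 := by
  intro v; rw [qBranch]; split_ifs <;> norm_num

lemma cnt_image_cast (b : ℕ → Bool) (J : Finset ℕ) (S : Fin n → (List Bool → Bool)) :
    ((cnt n (J.image (pref b)) S : ℕ) : ℝ)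
      = ∑ j ∈ J, ∑ i : Fin n, (if S i (pref b j) then (1:ℝ) else 0) := by
  rw [cnt]
  push_cast
  rw [Finset.sum_comm, Finset.sum_image (fun x _ y _ h => pref_inj b h)]

lemma seq_eq (b : ℕ → Bool) (S : Fin n → (List Bool → Bool)) (d : ℕ) :
    (1 / (d : ℝ)) * ∑ j ∈ Finset.range d,
        (1 / (n : ℝ)) * ∑ i : Fin n, (if S i (pref b (j + 1)) then (1 : ℝ) else 0)
      = (1/((n:ℝ)*d)) * ∑ j ∈ Finset.Ioc 0 d,
          ∑ i : Fin n, (if S i (pref b j) then (1:ℝ) else 0) := by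
  have h1 : Finset.Ioc 0 d = Finset.Ico 1 (d+1) := by
    ext x; simp [Nat.lt_succ_iff]; omega
  rw [h1, Finset.sum_Ico_eq_sum_range]
  simp only [add_tsub_cancel_right]
  rw [← Finset.mul_sum, ← mul_assoc]
  have : ∀ j ∈ Finset.range d, ∑ i : Fin n, (if S i (pref b (1 + j)) then (1 : ℝ) else 0)
      = ∑ i : Fin n, (if S i (pref b (j + 1)) then (1 : ℝ) else 0) := by
    intro j _; rw [add_comm]
  rw [Finset.sum_congr rfl this]
  congr 1
  rw [div_mul_div_comm, one_mul, mul_comm]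


/-! ### The bad events -/

def Vbr (b : ℕ → Bool) (d : ℕ) : Finset (List Bool) := (Finset.Ioc 0 d).image (pref b)

lemma Vbr_card (b : ℕ → Bool) (d : ℕ) : (Vbr b d).card = d := by
  rw [Vbr, Finset.card_image_of_injective _ (pref_inj b), Nat.card_Ioc]; omega

def VoffU (k d : ℕ) (u : List Bool) : Finset (List Bool) :=
  (Finset.Ioc k d).image (fun j => u.take j)

def Uset (bstar : ℕ → Bool) (k d : ℕ) : Finset (List Bool) :=
  ((Finset.univ : Finset (Fin d → Bool)).image List.ofFn).filter
    (fun u => u.take (k+1) ≠ pref bstar (k+1))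

def Goff (bstar : ℕ → Bool) (n k d : ℕ) : Set (Fin n → (List Bool → Bool)) :=
  ⋃ u ∈ Uset bstar k d, {S | n*(d-k)/2 + 1 ≤ cnt n (VoffU k d u) S}

noncomputable def cup (ε : ℝ) : ℝ := (1 + 2*ε/3) * (1+ε) ^ (-(2/3+ε) : ℝ)

noncomputable def clow (ε : ℝ) : ℝ := (1 - 2*ε/3) * (1-ε) ^ (-(2/3-ε) : ℝ)

def Hup (bstar : ℕ → Bool) (n : ℕ) (ε : ℝ) (d : ℕ) : Set (Fin n → (List Bool → Bool)) :=
  {S | ⌈(2/3+ε)*((n*d : ℕ):ℝ)⌉₊ ≤ cnt n (Vbr bstar d) S}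

def Hlow (bstar : ℕ → Bool) (n : ℕ) (ε : ℝ) (d : ℕ) : Set (Fin n → (List Bool → Bool)) :=
  {S | cnt n (Vbr bstar d) S ≤ ⌊(2/3-ε)*((n*d : ℕ):ℝ)⌋₊}

/-! ### Measure bounds for the bad events -/

lemma measure_off_event_le {bstar : ℕ → Bool} (hμ : IsBernoulliProduct (qBranch bstar) μ)
    (hn : 36 ≤ n) {k d : ℕ} (hkd : k < d) {u : List Bool} (hu : u ∈ Uset bstar k d) :
    (Measure.pi fun _ : Fin n => μ) {S | n*(d-k)/2 + 1 ≤ cnt n (VoffU k d u) S}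
      ≤ ENNReal.ofReal (((8:ℝ)/9)^(18*(d-k))) := by
  obtain ⟨himg, hne⟩ := Finset.mem_filter.1 hu
  obtain ⟨g, -, rfl⟩ := Finset.mem_image.1 himg
  have hlen : (List.ofFn g).length = d := List.length_ofFn
  have hoff : ∀ v ∈ VoffU k d (List.ofFn g), qBranch bstar v = 1/3 := by
    intro v hv
    obtain ⟨j, hj, rfl⟩ := Finset.mem_image.1 hv
    rw [Finset.mem_Ioc] at hj
    have hvlen : ((List.ofFn g).take j).length = j := by
      rw [List.length_take, hlen]; omega
    rw [qBranch, hvlen, if_neg]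
    intro hEq
    apply hne
    have h2 := congrArg (List.take (k+1)) hEq
    rw [List.take_take, pref_take bstar (by omega : k+1 ≤ j)] at h2
    rw [min_eq_left (by omega : k+1 ≤ j)] at h2
    exact h2.symm
  have hcard : (VoffU k d (List.ofFn g)).card = d - k := by
    rw [VoffU, Finset.card_image_of_injOn, Nat.card_Ioc]
    intro x hx y hy hxy
    rw [Finset.mem_coe, Finset.mem_Ioc] at hx hy
    have := congrArg List.length hxy
    rw [List.length_take, List.length_take, hlen] at this
    omega
  have h := measure_upper_le (n := n) hμ (qBranch_bounds bstar) (p := 1/3) hoff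
    (n*(d-k)/2 + 1) (r := 2) one_le_two
  rw [hcard] at h
  refine le_trans h (ENNReal.ofReal_le_ofReal ?_)
  have hbase : ((1:ℝ)/3*2 + (1 - 1/3)) = 4/3 := by norm_num
  rw [hbase]
  exact off_num hn (d-k)

lemma off_geom {k d : ℕ} (hkd : k < d) :
    (2:ℝ)^d * ((8:ℝ)/9)^(18*(d-k)) ≤ (9/8:ℝ)^(18*k) * (2*((8:ℝ)/9)^18)^d := by
  apply le_of_eq
  have hne : ((8:ℝ)/9) ≠ 0 := by norm_num
  rw [show 18*(d-k) = 18*d - 18*k by omega,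
    pow_sub₀ _ hne (by omega : 18*k ≤ 18*d), mul_pow, ← pow_mul]
  rw [show ((9:ℝ)/8) = ((8:ℝ)/9)⁻¹ by norm_num, inv_pow]
  field_simp

lemma measure_Goff_le {bstar : ℕ → Bool} (hμ : IsBernoulliProduct (qBranch bstar) μ)
    (hn : 36 ≤ n) (k d : ℕ) :
    (Measure.pi fun _ : Fin n => μ) (Goff bstar n k d)
      ≤ ENNReal.ofReal ((9/8:ℝ)^(18*k)) * (ENNReal.ofReal (2*((8:ℝ)/9)^18))^d := by
  rcases le_or_gt d k with hdk | hkd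
  · have hempty : Goff bstar n k d = ∅ := by
      rw [Goff]
      refine Set.eq_empty_iff_forall_notMem.2 fun S hS => ?_
      obtain ⟨u, hu, hmem⟩ := Set.mem_iUnion₂.1 hS
      have h0 : VoffU k d u = ∅ := by
        rw [VoffU, Finset.Ioc_eq_empty (by omega), Finset.image_empty]
      rw [Set.mem_setOf_eq, h0] at hmem
      have : cnt n (∅ : Finset (List Bool)) S = 0 := by simp [cnt]
      rw [this] at hmem
      omega
    rw [hempty]
    simp
  · calc (Measure.pi fun _ : Fin n => μ) (Goff bstar n k d)
        ≤ ∑ u ∈ Uset bstar k d, (Measure.pi fun _ : Fin n => μ)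
            {S | n*(d-k)/2 + 1 ≤ cnt n (VoffU k d u) S} :=
          measure_biUnion_finset_le _ _
      _ ≤ ∑ _u ∈ Uset bstar k d, ENNReal.ofReal (((8:ℝ)/9)^(18*(d-k))) :=
          Finset.sum_le_sum fun u hu => measure_off_event_le hμ hn hkd hu
      _ = ((Uset bstar k d).card : ENNReal) * ENNReal.ofReal (((8:ℝ)/9)^(18*(d-k))) := by
          rw [Finset.sum_const, nsmul_eq_mul]
      _ ≤ ((2^d : ℕ) : ENNReal) * ENNReal.ofReal (((8:ℝ)/9)^(18*(d-k))) := by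
          refine mul_le_mul_left (Nat.cast_le.2 ?_) _
          refine le_trans (Finset.card_filter_le _ _) (le_trans Finset.card_image_le ?_)
          simp [Finset.card_univ]
      _ ≤ ENNReal.ofReal ((9/8:ℝ)^(18*k)) * (ENNReal.ofReal (2*((8:ℝ)/9)^18))^d := by
          rw [← ENNReal.ofReal_natCast, ← ENNReal.ofReal_mul (by positivity),
            ← ENNReal.ofReal_pow (by positivity), ← ENNReal.ofReal_mul (by positivity)]
          refine ENNReal.ofReal_le_ofReal ?_
          push_cast
          exact off_geom hkd

lemma measure_Hup_le {bstar : ℕ → Bool} (hμ : IsBernoulliProduct (qBranch bstar) μ)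
    {ε : ℝ} (hε : 0 < ε) (d : ℕ) :
    (Measure.pi fun _ : Fin n => μ) (Hup bstar n ε d)
      ≤ (ENNReal.ofReal ((cup ε)^n)) ^ d := by
  have hp : ∀ v ∈ Vbr bstar d, qBranch bstar v = 2/3 := by
    intro v hv
    obtain ⟨j, _, rfl⟩ := Finset.mem_image.1 hv
    exact qBranch_mem bstar j
  have h := measure_upper_le (n := n) hμ (qBranch_bounds bstar) (p := 2/3) hp
    (⌈(2/3+ε)*((n*d : ℕ):ℝ)⌉₊) (r := 1+ε) (by linarith)
  rw [Vbr_card] at h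
  refine le_trans h ?_
  have hcup : (0:ℝ) ≤ cup ε := by rw [cup]; positivity
  rw [← ENNReal.ofReal_pow (pow_nonneg hcup n)]
  refine ENNReal.ofReal_le_ofReal ?_
  rw [← pow_mul]
  exact up_pack (N := n*d) hε

lemma measure_Hlow_le {bstar : ℕ → Bool} (hμ : IsBernoulliProduct (qBranch bstar) μ)
    {ε : ℝ} (hε : 0 < ε) (hε2 : ε ≤ 1/2) (d : ℕ) :
    (Measure.pi fun _ : Fin n => μ) (Hlow bstar n ε d)
      ≤ (ENNReal.ofReal ((clow ε)^n)) ^ d := by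
  have hp : ∀ v ∈ Vbr bstar d, qBranch bstar v = 2/3 := by
    intro v hv
    obtain ⟨j, _, rfl⟩ := Finset.mem_image.1 hv
    exact qBranch_mem bstar j
  have h := measure_lower_le (n := n) hμ (qBranch_bounds bstar) (p := 2/3) hp
    (⌊(2/3-ε)*((n*d : ℕ):ℝ)⌋₊) (r := 1-ε) (by linarith) (by linarith)
  rw [Vbr_card] at h
  refine le_trans h ?_
  have hclow : (0:ℝ) ≤ clow ε := by
    rw [clow]
    have h1 : (0:ℝ) ≤ 1 - 2*ε/3 := by linarith
    have h2 : (0:ℝ) < 1 - ε := by linarith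
    positivity
  rw [← ENNReal.ofReal_pow (pow_nonneg hclow n)]
  refine ENNReal.ofReal_le_ofReal ?_
  rw [← pow_mul]
  exact low_pack (N := n*d) hε hε2

/-! ### Borel-Cantelli -/

lemma geom_tsum_ne_top {x : ENNReal} (hx : x < 1) (C : ENNReal) (hC : C ≠ ⊤) :
    (∑' d : ℕ, C * x ^ d) ≠ ⊤ := by
  rw [ENNReal.tsum_mul_left, ENNReal.tsum_geometric]
  refine ENNReal.mul_ne_top hC (ENNReal.inv_ne_top.2 ?_)
  rw [Ne, tsub_eq_zero_iff_le]
  exact fun h => absurd h hx.not_ge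

lemma ae_off {bstar : ℕ → Bool} (hμ : IsBernoulliProduct (qBranch bstar) μ) (hn : 36 ≤ n) :
    ∀ᵐ S ∂(Measure.pi fun _ : Fin n => μ), ∀ k : ℕ, ∀ᶠ d in atTop, S ∉ Goff bstar n k d := by
  rw [ae_all_iff]
  intro k
  refine ae_eventually_notMem ?_
  refine ne_top_of_le_ne_top (geom_tsum_ne_top ?_ _ ENNReal.ofReal_ne_top)
    (ENNReal.tsum_le_tsum fun d => measure_Goff_le hμ hn k d)
  rw [← ENNReal.ofReal_one]
  exact (ENNReal.ofReal_lt_ofReal_iff (by norm_num)).2 rho_lt_one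

noncomputable def epsL (L : ℕ) : ℝ := 1/((L:ℝ)+2)

lemma epsL_pos (L : ℕ) : 0 < epsL L := by rw [epsL]; positivity

lemma epsL_le (L : ℕ) : epsL L ≤ 1/2 := by
  rw [epsL]
  rw [div_le_div_iff₀ (by positivity) (by norm_num)]
  have : (0:ℝ) ≤ (L:ℝ) := Nat.cast_nonneg L
  linarith

lemma ae_branch {bstar : ℕ → Bool} (hμ : IsBernoulliProduct (qBranch bstar) μ) (hn : 36 ≤ n) :
    ∀ᵐ S ∂(Measure.pi fun _ : Fin n => μ), ∀ L : ℕ, ∀ᶠ d in atTop,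
      S ∉ Hup bstar n (epsL L) d ∧ S ∉ Hlow bstar n (epsL L) d := by
  rw [ae_all_iff]
  intro L
  have hε := epsL_pos L
  have hε2 := epsL_le L
  have hn0 : n ≠ 0 := by omega
  have hup : (∑' d : ℕ, (Measure.pi fun _ : Fin n => μ) (Hup bstar n (epsL L) d)) ≠ ⊤ := by
    refine ne_top_of_le_ne_top ?_ (ENNReal.tsum_le_tsum fun d => measure_Hup_le hμ hε d)
    have hcup0 : (0:ℝ) ≤ cup (epsL L) := by rw [cup]; positivity
    have hcup1 : cup (epsL L) < 1 := cup_lt_one hε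
    have : ENNReal.ofReal ((cup (epsL L))^n) < 1 := by
      rw [← ENNReal.ofReal_one]
      exact (ENNReal.ofReal_lt_ofReal_iff (by norm_num)).2 (pow_lt_one₀ hcup0 hcup1 hn0)
    simpa using geom_tsum_ne_top this 1 ENNReal.one_ne_top
  have hlow : (∑' d : ℕ, (Measure.pi fun _ : Fin n => μ) (Hlow bstar n (epsL L) d)) ≠ ⊤ := by
    refine ne_top_of_le_ne_top ?_ (ENNReal.tsum_le_tsum fun d => measure_Hlow_le hμ hε hε2 d)
    have h1 : (0:ℝ) ≤ 1 - 2*(epsL L)/3 := by linarith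
    have h2 : (0:ℝ) < 1 - epsL L := by linarith
    have hclow0 : (0:ℝ) ≤ clow (epsL L) := by rw [clow]; positivity
    have hclow1 : clow (epsL L) < 1 := clow_lt_one hε hε2
    have : ENNReal.ofReal ((clow (epsL L))^n) < 1 := by
      rw [← ENNReal.ofReal_one]
      exact (ENNReal.ofReal_lt_ofReal_iff (by norm_num)).2 (pow_lt_one₀ hclow0 hclow1 hn0)
    simpa using geom_tsum_ne_top this 1 ENNReal.one_ne_top
  filter_upwards [ae_eventually_notMem hup, ae_eventually_notMem hlow] with S h1 h2
  exact h1.and h2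

end TreeProof

open TreeProof

/-- For `μ = Prod (qBranch b*) ∈ Q_tree` and `n ≥ 36` i.i.d. samples, almost surely
`φ(b*) = 2/3`, `φ(b) ≤ 1/2` for every branch `b ≠ b*`, and in particular `b*` is the
unique branch with `φ(b) = 2/3`. -/
theorem tree_phi_identifies_branch (bstar : ℕ → Bool)
    (μ : Measure (List Bool → Bool)) (hμ : IsBernoulliProduct (qBranch bstar) μ)
    (n : ℕ) (hn : 36 ≤ n) :
    ∀ᵐ S ∂(Measure.pi fun _ : Fin n => μ),
      phi n S bstar = 2 / 3 ∧
      (∀ b : ℕ → Bool, b ≠ bstar → phi n S b ≤ 1 / 2) ∧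
      (∀ b : ℕ → Bool, phi n S b = 2 / 3 → b = bstar) := by
  have hn0 : 0 < n := by omega
  filter_upwards [ae_off hμ hn, ae_branch hμ hn] with S hoff hbr
  -- the sequence whose liminf is phi
  set A : (ℕ → Bool) → ℕ → ℝ := fun b d => (1 / (d : ℝ)) * ∑ j ∈ Finset.range d,
      (1 / (n : ℝ)) * ∑ i : Fin n, (if S i (pref b (j + 1)) then (1 : ℝ) else 0) with hA
  have hphi : ∀ b, phi n S b = Filter.liminf (A b) Filter.atTop := fun b => rfl
  have hA_nonneg : ∀ b d, 0 ≤ A b d := by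
    intro b d
    refine mul_nonneg (by positivity) (Finset.sum_nonneg fun j _ =>
      mul_nonneg (by positivity) (Finset.sum_nonneg fun i _ => ?_))
    split_ifs <;> norm_num
  -- Claim 1
  have hT : Filter.Tendsto (A bstar) Filter.atTop (nhds (2/3)) := by
    rw [Metric.tendsto_atTop]
    intro ε' hε'
    obtain ⟨L, hL⟩ := exists_nat_gt (1/ε')
    have hLe : epsL L < ε' := by
      rw [epsL, div_lt_iff₀ (by positivity)]
      rw [div_lt_iff₀ hε'] at hL
      nlinarith [Nat.cast_nonneg (α := ℝ) L]
    obtain ⟨D, hD⟩ := Filter.eventually_atTop.1 ((hbr L).and (Filter.eventually_ge_atTop 1))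
    refine ⟨D, fun d hd => ?_⟩
    obtain ⟨⟨hnup, hnlow⟩, hd1⟩ := hD d hd
    have hdR : (1:ℝ) ≤ (d:ℝ) := by exact_mod_cast hd1
    have hM : (0:ℝ) < (n:ℝ)*(d:ℝ) := by
      have : (0:ℝ) < (n:ℝ) := by exact_mod_cast hn0
      nlinarith
    have hcR : ((cnt n (Vbr bstar d) S : ℕ):ℝ)
        = ∑ j ∈ Finset.Ioc 0 d, ∑ i : Fin n, (if S i (pref bstar j) then (1:ℝ) else 0) :=
      cnt_image_cast bstar (Finset.Ioc 0 d) S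
    have hup' : ((cnt n (Vbr bstar d) S : ℕ):ℝ) < (2/3 + epsL L)*((n:ℝ)*(d:ℝ)) := by
      by_contra h
      push_neg at h
      refine hnup (Nat.ceil_le.2 ?_)
      push_cast
      exact h
    have hlow' : (2/3 - epsL L)*((n:ℝ)*(d:ℝ)) < ((cnt n (Vbr bstar d) S : ℕ):ℝ) := by
      by_contra h
      push_neg at h
      refine hnlow (Nat.le_floor ?_)
      push_cast
      exact h
    have hAval : A bstar d = 1/((n:ℝ)*(d:ℝ)) * ((cnt n (Vbr bstar d) S : ℕ):ℝ) := by
      rw [hA]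
      simp only []
      rw [seq_eq bstar S d, hcR]
    rw [Real.dist_eq, hAval]
    have hq1 : 1/((n:ℝ)*(d:ℝ)) * ((cnt n (Vbr bstar d) S : ℕ):ℝ) < 2/3 + epsL L := by
      rw [one_div, inv_mul_lt_iff₀ hM, mul_comm ((n:ℝ)*(d:ℝ))]
      exact hup'
    have hq2 : 2/3 - epsL L < 1/((n:ℝ)*(d:ℝ)) * ((cnt n (Vbr bstar d) S : ℕ):ℝ) := by
      rw [one_div, lt_inv_mul_iff₀ hM, mul_comm ((n:ℝ)*(d:ℝ))]
      exact hlow'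
    rw [abs_sub_lt_iff]
    constructor <;> linarith
  have hclaim1 : phi n S bstar = 2/3 := by rw [hphi bstar]; exact hT.liminf_eq
  -- Claim 2
  have hclaim2 : ∀ b : ℕ → Bool, b ≠ bstar → phi n S b ≤ 1 / 2 := by
    intro b hb
    have hex : ∃ j, b j ≠ bstar j := by
      by_contra h
      push_neg at h
      exact hb (funext h)
    set k := Nat.find hex with hkdef
    have hk : b k ≠ bstar k := Nat.find_spec hex
    have hlim : Filter.Tendsto (fun d : ℕ => 1/2 + (k:ℝ)/d) Filter.atTop (nhds (1/2)) := by
      have h0 := tendsto_const_div_atTop_nhds_zero_nat (k:ℝ)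
      have := Filter.Tendsto.add (tendsto_const_nhds (x := (1/2:ℝ)) (f := Filter.atTop)) h0
      simpa using this
    have hev : ∀ᶠ d in Filter.atTop, A b d ≤ 1/2 + (k:ℝ)/d := by
      filter_upwards [hoff k, Filter.eventually_ge_atTop (k+1)] with d hG hd
      have hdR : (0:ℝ) < (d:ℝ) := by
        have : 0 < d := by omega
        exact_mod_cast this
      have hkd : (k:ℝ) ≤ (d:ℝ) := by
        have : k ≤ d := by omega
        exact_mod_cast this
      have hM : (0:ℝ) < (n:ℝ)*(d:ℝ) := by
        have : (0:ℝ) < (n:ℝ) := by exact_mod_cast hn0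
        nlinarith
      have hu : pref b d ∈ Uset bstar k d := by
        rw [Uset, Finset.mem_filter]
        refine ⟨Finset.mem_image.2 ⟨fun i => b i.1, Finset.mem_univ _, rfl⟩, ?_⟩
        rw [pref_take b (by omega : k+1 ≤ d)]
        exact pref_ne (Nat.lt_succ_self k) hk
      have hnotin : ¬ (n*(d-k)/2 + 1 ≤ cnt n (VoffU k d (pref b d)) S) := by
        intro hmem
        exact hG (Set.mem_iUnion₂.2 ⟨pref b d, hu, hmem⟩)
      push_neg at hnotin
      have hVeq : VoffU k d (pref b d) = (Finset.Ioc k d).image (pref b) := by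
        rw [VoffU]
        apply Finset.image_congr
        intro j hj
        rw [Finset.mem_coe, Finset.mem_Ioc] at hj
        exact pref_take b hj.2
      rw [hVeq] at hnotin
      have hcnt2 : ((cnt n ((Finset.Ioc k d).image (pref b)) S : ℕ):ℝ)
          = ∑ j ∈ Finset.Ioc k d, ∑ i : Fin n, (if S i (pref b j) then (1:ℝ) else 0) :=
        cnt_image_cast b (Finset.Ioc k d) S
      have hcntle : ((cnt n ((Finset.Ioc k d).image (pref b)) S : ℕ):ℝ)
          ≤ (n:ℝ)*((d:ℝ)-(k:ℝ))/2 := by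
        have h' : cnt n ((Finset.Ioc k d).image (pref b)) S ≤ n*(d-k)/2 :=
          Nat.lt_succ_iff.1 hnotin
        refine le_trans (Nat.cast_le.2 h') (le_trans Nat.cast_div_le ?_)
        push_cast [Nat.cast_sub (by omega : k ≤ d)]
        exact le_rfl
      have hB2 : ∑ j ∈ Finset.Ioc k d, ∑ i : Fin n, (if S i (pref b j) then (1:ℝ) else 0)
          ≤ (n:ℝ)*((d:ℝ)-(k:ℝ))/2 := by rw [← hcnt2]; exact hcntle
      have hB1 : ∑ j ∈ Finset.Ioc 0 k, ∑ i : Fin n, (if S i (pref b j) then (1:ℝ) else 0)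
          ≤ (k:ℝ)*(n:ℝ) := by
        have step : ∀ j ∈ Finset.Ioc 0 k,
            ∑ i : Fin n, (if S i (pref b j) then (1:ℝ) else 0) ≤ (n:ℝ) := by
          intro j _
          calc ∑ i : Fin n, (if S i (pref b j) then (1:ℝ) else 0)
              ≤ ∑ _i : Fin n, (1:ℝ) := Finset.sum_le_sum fun i _ => by split_ifs <;> norm_num
            _ = (n:ℝ) := by simp
        calc ∑ j ∈ Finset.Ioc 0 k, ∑ i : Fin n, (if S i (pref b j) then (1:ℝ) else 0)
            ≤ ∑ _j ∈ Finset.Ioc 0 k, (n:ℝ) := Finset.sum_le_sum step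
          _ = (k:ℝ)*(n:ℝ) := by rw [Finset.sum_const, Nat.card_Ioc]; simp [nsmul_eq_mul]
      have hsplit : ∑ j ∈ Finset.Ioc 0 d, ∑ i : Fin n, (if S i (pref b j) then (1:ℝ) else 0)
          = (∑ j ∈ Finset.Ioc 0 k, ∑ i : Fin n, (if S i (pref b j) then (1:ℝ) else 0))
            + ∑ j ∈ Finset.Ioc k d, ∑ i : Fin n, (if S i (pref b j) then (1:ℝ) else 0) :=
        (Finset.sum_Ioc_consecutive _ (Nat.zero_le k) (by omega : k ≤ d)).symm
      have hAval : A b d = 1/((n:ℝ)*(d:ℝ))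
          * ∑ j ∈ Finset.Ioc 0 d, ∑ i : Fin n, (if S i (pref b j) then (1:ℝ) else 0) := by
        rw [hA]
        simp only []
        rw [seq_eq b S d]
      rw [hAval, hsplit]
      have key : (∑ j ∈ Finset.Ioc 0 k, ∑ i : Fin n, (if S i (pref b j) then (1:ℝ) else 0))
            + (∑ j ∈ Finset.Ioc k d, ∑ i : Fin n, (if S i (pref b j) then (1:ℝ) else 0))
          ≤ (1/2 + (k:ℝ)/(d:ℝ)) * ((n:ℝ)*(d:ℝ)) := by
        have hrhs : (1/2 + (k:ℝ)/(d:ℝ)) * ((n:ℝ)*(d:ℝ)) = (n:ℝ)*(d:ℝ)/2 + (k:ℝ)*(n:ℝ) := by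
          field_simp
        rw [hrhs]
        have : (n:ℝ)*((d:ℝ)-(k:ℝ))/2 ≤ (n:ℝ)*(d:ℝ)/2 := by
          have hn' : (0:ℝ) ≤ (n:ℝ) := by positivity
          have hk0 : (0:ℝ) ≤ (k:ℝ) := by positivity
          nlinarith
        linarith
      rw [one_div, inv_mul_le_iff₀ hM]
      calc _ ≤ (1/2 + (k:ℝ)/(d:ℝ)) * ((n:ℝ)*(d:ℝ)) := key
        _ = (n:ℝ)*(d:ℝ) * (1/2 + (k:ℝ)/(d:ℝ)) := by ring
    rw [hphi b]
    have h1 : Filter.IsBoundedUnder (· ≥ ·) Filter.atTop (A b) :=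
      Filter.isBoundedUnder_of ⟨0, fun d => hA_nonneg b d⟩
    have h2 : Filter.IsCoboundedUnder (· ≥ ·) Filter.atTop (fun d : ℕ => 1/2 + (k:ℝ)/d) :=
      hlim.isBoundedUnder_le.isCoboundedUnder_ge
    calc Filter.liminf (A b) Filter.atTop
        ≤ Filter.liminf (fun d : ℕ => 1/2 + (k:ℝ)/d) Filter.atTop :=
          Filter.liminf_le_liminf hev h1 h2
      _ = 1/2 := hlim.liminf_eq
  refine ⟨hclaim1, hclaim2, fun b hphib => ?_⟩
  by_contra hbne
  have := hclaim2 b hbne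
  rw [hphib] at this
  norm_num at this
end
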